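/- arXiv:1810.07856 — 2 statements merged into one kernel-verified Lean document; each statement's English description precedes it below -/
import Mathlib

section
/- Let X be a 6×6 integer matrix with all entries in {−1,+1} such that det X ≠ 0 and 5 divides det X. Then |det X| = 160. In other words, 160 is the only nonzero value in the determinant spectrum of 6×6 ±1-matrices that is divisible by 5. -/
open Matrix Finset

private theorem det_div_32aux (X : Matrix (Fin 6) (Fin 6) ℤ)
    (hX : ∀ i j, X i j = 1 ∨ X i j = -1) : (32 : ℤ) ∣ X.det := by
  set E : Matrix (Fin 6) (Fin 6) ℤ :=
    Matrix.of (fun i j => (if i = j then 1 else 0) + (if j = 0 ∧ i ≠ 0 then -1 else 0)) with hE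
  set Z : Matrix (Fin 6) (Fin 6) ℤ :=
    Matrix.of (fun i j => if i = 0 then X 0 j else (X i j - X 0 j) / 2) with hZ
  set D : Matrix (Fin 6) (Fin 6) ℤ := Matrix.diagonal (fun i => if i = 0 then 1 else 2) with hD
  have hEdet : E.det = 1 := by
    rw [Matrix.det_of_lowerTriangular]
    · simp [hE]
    · intro i j hij
      simp only [hE, Matrix.of_apply]
      have hij' : i < j := hij
      rw [if_neg hij'.ne, if_neg]
      · ring
      · rintro ⟨rfl, -⟩
        exact absurd hij' (by omega)
  have hEX : E * X = D * Z := by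
    ext i j
    rw [Matrix.mul_apply, Matrix.diagonal_mul]
    by_cases hi : i = 0
    · subst hi
      simp [hE, hZ, Matrix.of_apply, Finset.sum_ite_eq, add_mul]
    · have h2 : 2 * ((X i j - X 0 j) / 2) = X i j - X 0 j := by
        rcases hX i j with h | h <;> rcases hX 0 j with h' | h' <;> rw [h, h'] <;> norm_num
      simp only [hE, hZ, Matrix.of_apply, hi, if_false, ite_false, ne_eq, not_false_iff, and_true, add_mul,
        Finset.sum_add_distrib, ite_mul, one_mul, zero_mul, neg_one_mul, Finset.sum_ite_eq,
        Finset.mem_univ, if_true, Finset.sum_ite_eq', h2]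
      omega
  have key : X.det = 32 * Z.det := by
    calc X.det = E.det * X.det := by rw [hEdet, one_mul]
    _ = (E * X).det := by rw [Matrix.det_mul]
    _ = (D * Z).det := by rw [hEX]
    _ = D.det * Z.det := by rw [Matrix.det_mul]
    _ = 32 * Z.det := by
        rw [hD, Matrix.det_diagonal]
        norm_num [Fin.prod_univ_six, show ((1:Fin 6) ≠ 0) from by decide, show ((2:Fin 6) ≠ 0) from by decide, show ((3:Fin 6) ≠ 0) from by decide, show ((4:Fin 6) ≠ 0) from by decide, show ((5:Fin 6) ≠ 0) from by decide]
  exact ⟨Z.det, key⟩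


private theorem det_bound_aux (X : Matrix (Fin 6) (Fin 6) ℤ)
    (hX : ∀ i j, X i j = 1 ∨ X i j = -1) : X.det ^ 2 ≤ 46656 := by
  set Y : Matrix (Fin 6) (Fin 6) ℝ := X.map (Int.cast) with hY
  have hYdet : Y.det = (X.det : ℝ) := by
    rw [hY, show X.map Int.cast = (Int.castRingHom ℝ).mapMatrix X from rfl,
      ← RingHom.map_det]
    simp
  set G : Matrix (Fin 6) (Fin 6) ℝ := Y * Yᴴ with hG
  have hPSD : G.PosSemidef := Matrix.posSemidef_self_mul_conjTranspose Y
  have hH : G.IsHermitian := hPSD.isHermitian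
  set lam : Fin 6 → ℝ := hH.eigenvalues with hlam
  have hnn : ∀ i, 0 ≤ lam i := hPSD.eigenvalues_nonneg
  -- trace of G
  have htr : G.trace = 36 := by
    rw [hG, Matrix.trace]
    have : ∀ i : Fin 6, (Y * Yᴴ).diag i = 6 := by
      intro i
      simp only [Matrix.diag, Matrix.mul_apply, Matrix.conjTranspose_apply, hY, Matrix.map_apply,
        star_trivial]
      have : ∀ j : Fin 6, ((X i j : ℝ)) * (X i j : ℝ) = 1 := by
        intro j
        rcases hX i j with h | h <;> rw [h] <;> norm_num
      rw [Finset.sum_congr rfl fun j _ => this j]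
      simp
    rw [Finset.sum_congr rfl fun i _ => this i]
    simp
    norm_num
  -- sum of eigenvalues = 36
  have hsum : ∑ i, lam i = 36 := by
    have h1 : G.trace = ∑ i, lam i := by
      nth_rewrite 1 [hH.spectral_theorem]
      rw [Unitary.conjStarAlgAut_apply, Matrix.trace_mul_cycle]
      rw [Unitary.coe_star_mul_self, Matrix.one_mul, Matrix.trace_diagonal]
      simp [hlam]
    rw [← h1, htr]
  -- product of eigenvalues = det G
  have hdetG : G.det = ∏ i, lam i := by
    rw [hH.det_eq_prod_eigenvalues]
    simp [hlam]
  -- AM-GM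
  have hamgm : ∏ i, lam i ≤ 6 ^ 6 := by
    have am := Real.geom_mean_le_arith_mean_weighted Finset.univ (fun _ => (6:ℝ)⁻¹) lam
      (fun i _ => by norm_num) (by simp) (fun i _ => hnn i)
    have hr : ∑ i, (6:ℝ)⁻¹ * lam i = 6 := by
      rw [← Finset.mul_sum, hsum]; norm_num
    have h6 : ∏ i, lam i = (∏ i, lam i ^ ((6:ℝ)⁻¹)) ^ (6:ℕ) := by
      rw [← Finset.prod_pow]
      refine Finset.prod_congr rfl fun i _ => ?_
      rw [← Real.rpow_natCast (lam i ^ ((6:ℝ)⁻¹)) 6, ← Real.rpow_mul (hnn i)]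
      norm_num
    rw [h6]
    calc (∏ i, lam i ^ ((6:ℝ)⁻¹)) ^ (6:ℕ) ≤ (∑ i, (6:ℝ)⁻¹ * lam i) ^ (6:ℕ) :=
          pow_le_pow_left₀ (Finset.prod_nonneg fun i _ => Real.rpow_nonneg (hnn i) _) am 6
    _ = 6 ^ 6 := by rw [hr]
  have hdetsq : (X.det : ℝ) ^ 2 ≤ 46656 := by
    have : G.det = (X.det : ℝ) ^ 2 := by
      rw [hG, Matrix.det_mul, Matrix.det_conjTranspose, hYdet]
      simp [sq]
    nlinarith [hdetG, hamgm, this]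
  exact_mod_cast hdetsq

/-- `160` is the only nonzero value in the determinant spectrum of `6×6`
`±1`-matrices that is divisible by `5`. -/
theorem six_by_six_det_div_five (X : Matrix (Fin 6) (Fin 6) ℤ)
    (hX : ∀ i j, X i j = 1 ∨ X i j = -1) (hne : X.det ≠ 0) (hdvd : (5 : ℤ) ∣ X.det) :
    |X.det| = 160 := by
  have h32 : (32 : ℤ) ∣ X.det := det_div_32aux X hX
  have hbd : X.det ^ 2 ≤ 46656 := det_bound_aux X hX
  have hco : IsCoprime (32 : ℤ) 5 := by
    rw [Int.isCoprime_iff_gcd_eq_one]; decide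
  have h160 : (160 : ℤ) ∣ X.det := by
    have := hco.mul_dvd h32 hdvd
    norm_num at this
    exact this
  obtain ⟨k, hk⟩ := h160
  have hk0 : k ≠ 0 := by rintro rfl; simp [hk] at hne
  have hk2 : -1 ≤ k ∧ k ≤ 1 := by constructor <;> nlinarith [hk ▸ hbd]
  have : k = 1 ∨ k = -1 := by omega
  rcases this with rfl | rfl <;> rw [hk] <;> norm_num
end

section
/- Let X be an 8×8 matrix with all entries in {−1,+1} such that |det X| = 4096 (i.e., X is a maximal determinant 8×8 ±1-matrix). Then every 8×8 ±1-matrix Y at Hamming distance exactly 1 from X satisfies |det Y| = 3072; that is, changing any single entry of a maximal 8×8 ±1-matrix results in a matrix with determinant ±3072. -/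
open Matrix

/-- The Hamming distance between two matrices: the number of entries in which they differ. -/
noncomputable def matHammingDist {n m : ℕ} (A B : Matrix (Fin n) (Fin m) ℝ) : ℕ :=
  {p : Fin n × Fin m | A p.1 p.2 ≠ B p.1 p.2}.ncard

/-- Equality case of AM-GM, via `x + 1 ≤ exp x`. -/
lemma amgm_eq_one' {ι : Type*} [Fintype ι] [DecidableEq ι] (f : ι → ℝ) (h0 : ∀ i, 0 ≤ f i)
    (hs : ∑ i, f i = Fintype.card ι) (hp : ∏ i, f i = 1) : ∀ i, f i = 1 := by
  have hpos : ∀ i, 0 < f i := by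
    intro i
    rcases (h0 i).lt_or_eq with h | h
    · exact h
    · exfalso
      have h0' : ∏ j, f j = 0 := Finset.prod_eq_zero (Finset.mem_univ i) h.symm
      rw [hp] at h0'; norm_num at h0'
  intro k
  by_contra hk
  have h1 : ∀ i, f i ≤ Real.exp (f i - 1) := fun i => by
    have := Real.add_one_le_exp (f i - 1); linarith
  have hklt : f k < Real.exp (f k - 1) := by
    have := Real.add_one_lt_exp (x := f k - 1) (by intro h; apply hk; linarith)
    linarith
  have hrest : ∏ i ∈ Finset.univ.erase k, f i
      ≤ Real.exp (∑ i ∈ Finset.univ.erase k, (f i - 1)) := by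
    rw [Real.exp_sum]
    exact Finset.prod_le_prod (fun i _ => h0 i) (fun i _ => h1 i)
  have hrestpos : 0 < ∏ i ∈ Finset.univ.erase k, f i :=
    Finset.prod_pos (fun i _ => hpos i)
  have key : ∏ i, f i < Real.exp (∑ i, (f i - 1)) := by
    rw [← Finset.mul_prod_erase Finset.univ f (Finset.mem_univ k),
        ← Finset.add_sum_erase Finset.univ (fun i => f i - 1) (Finset.mem_univ k), Real.exp_add]
    calc f k * ∏ i ∈ Finset.univ.erase k, f i
        < Real.exp (f k - 1) * ∏ i ∈ Finset.univ.erase k, f i :=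
          mul_lt_mul_of_pos_right hklt hrestpos
      _ ≤ Real.exp (f k - 1) * Real.exp (∑ i ∈ Finset.univ.erase k, (f i - 1)) :=
          mul_le_mul_of_nonneg_left hrest (Real.exp_pos _).le
  have hsum0 : ∑ i, (f i - 1) = 0 := by
    rw [Finset.sum_sub_distrib, hs]
    simp
  rw [hp, hsum0, Real.exp_zero] at key
  exact lt_irrefl _ key

open scoped ComplexOrder in
/-- Generic version over an `RCLike` field: flipping one entry of a maximal-determinant
`±1` matrix of size `8` multiplies the determinant by `3/4`. -/
lemma neighbor_det {𝕜 : Type} [RCLike 𝕜] (X Y : Matrix (Fin 8) (Fin 8) 𝕜)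
    (hX : ∀ i j, X i j = 1 ∨ X i j = -1)
    (hd : X.det = 4096 ∨ X.det = -4096)
    (i j : Fin 8) (hflip : Y i j = -X i j)
    (hoth : ∀ a b, (a, b) ≠ (i, j) → Y a b = X a b) :
    Y.det = X.det * (3 / 4) := by
  have hsq : ∀ a b, X a b * X a b = 1 := fun a b => by
    rcases hX a b with h | h <;> rw [h] <;> ring
  have hconj : Xᴴ = Xᵀ := by
    ext a b
    rw [conjTranspose_apply, transpose_apply]
    rcases hX b a with h | h <;> rw [h] <;> simp
  have hPSD : (X * Xᵀ).PosSemidef := by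
    rw [← hconj]; exact posSemidef_self_mul_conjTranspose X
  have hG : (X * Xᵀ).IsHermitian := hPSD.1
  have hdne : X.det ≠ 0 := by
    rcases hd with h | h <;> rw [h] <;> norm_num
  have hdetG : (X * Xᵀ).det = 16777216 := by
    rw [det_mul, det_transpose]
    rcases hd with h | h <;> rw [h] <;> norm_num
  have htr : (X * Xᵀ).trace = 64 := by
    have hdiag : ∀ a, (X * Xᵀ) a a = 8 := fun a => by
      rw [mul_apply]
      calc ∑ k, X a k * Xᵀ k a = ∑ _k : Fin 8, (1 : 𝕜) :=
            Finset.sum_congr rfl fun k _ => by rw [transpose_apply, hsq]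
        _ = 8 := by simp
    simp only [Matrix.trace, Matrix.diag, hdiag]
    simp
    norm_num
  have hlam0 : ∀ a, 0 ≤ hG.eigenvalues a := hPSD.eigenvalues_nonneg
  have hprod : ∏ a, hG.eigenvalues a = 16777216 := by
    have h := hG.det_eq_prod_eigenvalues
    rw [hdetG, ← RCLike.ofReal_prod] at h
    exact_mod_cast h.symm
  have hU1 := (Unitary.mem_iff.mp hG.eigenvectorUnitary.2).1
  have hU2 := (Unitary.mem_iff.mp hG.eigenvectorUnitary.2).2
  have hsum : ∑ a, hG.eigenvalues a = 64 := by
    have ht := congrArg Matrix.trace hG.spectral_theorem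
    rw [htr, Unitary.conjStarAlgAut_apply, Matrix.trace_mul_cycle, hU1, one_mul, Matrix.trace_diagonal] at ht
    simp only [Function.comp_apply] at ht
    rw [← RCLike.ofReal_sum] at ht
    exact_mod_cast ht.symm
  have hall : ∀ a, hG.eigenvalues a = 8 := by
    have h8 := amgm_eq_one' (fun a => hG.eigenvalues a / 8)
      (fun a => by have := hlam0 a; positivity)
      (by rw [← Finset.sum_div, hsum]; norm_num)
      (by rw [Finset.prod_div_distrib, hprod]; norm_num)
    intro a
    have := h8 a
    field_simp at this
    linarith
  have hgram : X * Xᵀ = (8 : 𝕜) • 1 := by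
    have hdiagfun : (RCLike.ofReal ∘ hG.eigenvalues : Fin 8 → 𝕜) = fun _ => (8 : 𝕜) := by
      funext a
      simp only [Function.comp_apply, hall a]
      norm_cast
    have hspec := hG.spectral_theorem
    rw [hdiagfun] at hspec
    have hd2 : Matrix.diagonal (fun _ : Fin 8 => (8 : 𝕜)) = (8 : 𝕜) • 1 := by
      ext a b
      by_cases h : a = b
      · subst h; simp
      · simp [Matrix.diagonal_apply_ne _ h, Matrix.one_apply_ne h]
    rw [hd2, Unitary.conjStarAlgAut_apply, Matrix.mul_smul, Matrix.mul_one, Matrix.smul_mul, hU2] at hspec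
    exact hspec
  have hinv : X⁻¹ = (8 : 𝕜)⁻¹ • Xᵀ := by
    apply inv_eq_right_inv
    rw [Matrix.mul_smul, hgram, smul_smul, inv_mul_cancel₀ (by norm_num : (8 : 𝕜) ≠ 0), one_smul]
  have hadj : X.adjugate = X.det • X⁻¹ := by
    rw [Matrix.inv_def, Ring.inverse_eq_inv, smul_smul, mul_inv_cancel₀ hdne, one_smul]
  have hcof : (X.updateRow i ((Pi.single j 1 : Fin 8 → 𝕜))).det = X.det * ((8 : 𝕜)⁻¹ * X i j) := by
    rw [← adjugate_apply, hadj, hinv]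
    simp [Matrix.smul_apply, Matrix.transpose_apply, smul_eq_mul]
  have hYeq : Y = X.updateRow i (X i + (-2 * X i j) • (Pi.single j 1 : Fin 8 → 𝕜)) := by
    ext a b
    by_cases ha : a = i
    · subst ha
      rw [Matrix.updateRow_self]
      by_cases hb : b = j
      · subst hb
        simp only [Pi.add_apply, Pi.smul_apply, Pi.single_eq_same, smul_eq_mul, mul_one]
        rw [hflip]; ring
      · rw [hoth a b (by simp [hb])]
        simp [Pi.single_eq_of_ne hb]
    · rw [Matrix.updateRow_ne ha]
      exact hoth a b (by simp [ha])
  rw [hYeq, det_updateRow_add, det_updateRow_smul, Matrix.updateRow_eq_self, hcof]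
  linear_combination (-(X.det) / 4) * hsq i j

/-- Changing any single entry of a maximal determinant `8×8` `±1`-matrix
(`|det X| = 4096`) results in a matrix with absolute determinant `3072`. -/
theorem neighbors_of_maximal_eight (X : Matrix (Fin 8) (Fin 8) ℝ)
    (hX : ∀ i j, X i j = 1 ∨ X i j = -1) (hdet : |X.det| = 4096) :
    ∀ Y : Matrix (Fin 8) (Fin 8) ℝ, (∀ i j, Y i j = 1 ∨ Y i j = -1) →
      matHammingDist Y X = 1 → |Y.det| = 3072 := by
  intro Y hY hdist
  obtain ⟨p, hp⟩ := Set.ncard_eq_one.mp hdist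
  obtain ⟨i, j⟩ := p
  have hne : Y i j ≠ X i j := by
    have : ((i, j) : Fin 8 × Fin 8) ∈ {q : Fin 8 × Fin 8 | Y q.1 q.2 ≠ X q.1 q.2} := by
      rw [hp]; exact rfl
    exact this
  have hoth : ∀ a b, (a, b) ≠ ((i : Fin 8), (j : Fin 8)) → Y a b = X a b := by
    intro a b hab
    by_contra h
    have hmem : ((a, b) : Fin 8 × Fin 8) ∈ {q : Fin 8 × Fin 8 | Y q.1 q.2 ≠ X q.1 q.2} := h
    rw [hp] at hmem
    exact hab hmem
  have hflip : Y i j = -X i j := by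
    rcases hX i j with h | h <;> rcases hY i j with h' | h' <;> simp_all
  have hd : X.det = 4096 ∨ X.det = -4096 := (abs_eq (by norm_num)).mp hdet
  have eCR : @EuclideanDomain.toCommRing ℝ (@Field.toEuclideanDomain ℝ (@NormedField.toField ℝ
      (@DenselyNormedField.toNormedField ℝ (@RCLike.toDenselyNormedField ℝ Real.instRCLike))))
      = Real.commRing := rfl
  have hd' : @Matrix.det (Fin 8) _ _ ℝ (@EuclideanDomain.toCommRing ℝ
        (@Field.toEuclideanDomain ℝ (@NormedField.toField ℝ
        (@DenselyNormedField.toNormedField ℝ (@RCLike.toDenselyNormedField ℝ Real.instRCLike))))) X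
        = 4096 ∨
      @Matrix.det (Fin 8) _ _ ℝ (@EuclideanDomain.toCommRing ℝ
        (@Field.toEuclideanDomain ℝ (@NormedField.toField ℝ
        (@DenselyNormedField.toNormedField ℝ (@RCLike.toDenselyNormedField ℝ Real.instRCLike))))) X
        = -4096 := by
    rw [eCR]; exact hd
  have hYd := neighbor_det (𝕜 := ℝ) X Y hX hd' i j hflip hoth
  have hYd : Y.det = X.det * (3 / 4) := hYd
  rw [hYd]
  rcases hd with h | h <;> rw [h] <;> norm_num [abs_of_nonneg, abs_of_nonpos]
end
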